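/- If Ω is a Hermitian operator on a finite-dimensional Hilbert space with 0 ≤ Ω ≤ I and Ω|ψ⟩ = |ψ⟩ for a unit vector ψ, then for any density operator σ with ⟨ψ|σ|ψ⟩ ≤ 1-ε (0 ≤ ε ≤ 1), tr[Ωσ] ≤ 1 - (1 - λ₂(Ω))ε, where λ₂(Ω) is the largest eigenvalue of (I - |ψ⟩⟨ψ|)Ω(I - |ψ⟩⟨ψ|) restricted to the orthogonal complement of ψ. Moreover, this bound is attained. -/

import Mathlib

open Matrix
open scoped ComplexOrder

set_option linter.unusedSectionVars false


variable {n : Type*} [Fintype n] [DecidableEq n]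

lemma dot_outer (w a b : n → ℂ) :
    star a ⬝ᵥ (vecMulVec w (star w)) *ᵥ b = (star a ⬝ᵥ w) * (star w ⬝ᵥ b) := by
  simp only [dotProduct, mulVec, vecMulVec_apply, Pi.star_apply, Finset.mul_sum,
    Finset.sum_mul]
  rw [Finset.sum_comm]
  refine Finset.sum_congr rfl fun i _ => Finset.sum_congr rfl fun j _ => by ring

lemma trace_outer (w : n → ℂ) : Matrix.trace (vecMulVec w (star w)) = star w ⬝ᵥ w := by
  simp only [Matrix.trace, diag_apply, vecMulVec_apply, dotProduct, Pi.star_apply]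
  exact Finset.sum_congr rfl fun i _ => by ring

lemma trace_mul_outer (A : Matrix n n ℂ) (w : n → ℂ) :
    Matrix.trace (A * vecMulVec w (star w)) = star w ⬝ᵥ A *ᵥ w := by
  simp only [Matrix.trace, diag_apply, mul_apply, vecMulVec_apply, dotProduct, mulVec,
    Pi.star_apply, Finset.mul_sum]
  refine Finset.sum_congr rfl fun i _ => Finset.sum_congr rfl fun j _ => by ring

lemma trace_outer_mul (w : n → ℂ) (σ : Matrix n n ℂ) :
    Matrix.trace (vecMulVec w (star w) * σ) = star w ⬝ᵥ σ *ᵥ w := by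
  rw [Matrix.trace_mul_comm, trace_mul_outer]

lemma smul_outer_herm (r : ℝ) (w : n → ℂ) :
    ((r : ℂ) • vecMulVec w (star w)).IsHermitian := by
  ext i j
  simp only [conjTranspose_apply, Matrix.smul_apply, vecMulVec_apply, Pi.star_apply,
    star_mul', star_star, smul_eq_mul, Complex.star_def, Complex.conj_ofReal, _root_.map_mul, Complex.conj_conj]
  ring

lemma outer_posSemidef (w : n → ℂ) : (vecMulVec w (star w)).PosSemidef := by
  refine Matrix.PosSemidef.of_dotProduct_mulVec_nonneg ?_ ?_
  · ext i j
    simp only [conjTranspose_apply, vecMulVec_apply, Pi.star_apply, star_mul', star_star]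
    ring
  · intro x
    rw [dot_outer]
    have : star x ⬝ᵥ w = star (star w ⬝ᵥ x) := by
      simp only [dotProduct, star_sum, star_mul', star_star, Pi.star_apply]
      exact Finset.sum_congr rfl fun i _ => by ring
    rw [this]
    exact star_mul_self_nonneg _

lemma diag_re_nonneg' {M : Matrix n n ℂ} (hM : M.PosSemidef) (i : n) : 0 ≤ (M i i).re := by
  have h := hM.re_dotProduct_nonneg (Pi.single i 1)
  simpa [dotProduct, mulVec, Pi.single_apply, mul_ite, ite_mul] using h

lemma trace_re_nonneg' {M : Matrix n n ℂ} (hM : M.PosSemidef) : 0 ≤ (Matrix.trace M).re := by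
  rw [Matrix.trace, Complex.re_sum]
  exact Finset.sum_nonneg fun i _ => diag_re_nonneg' hM i

lemma trace_mul_re_nonneg' {A B : Matrix n n ℂ} (hA : A.PosSemidef) (hB : B.PosSemidef) :
    0 ≤ (Matrix.trace (A * B)).re := by
  obtain ⟨S, hS⟩ : ∃ S : Matrix n n ℂ, A = star S * S := by
    open scoped MatrixOrder Matrix.Norms.L2Operator in
    exact CStarAlgebra.nonneg_iff_eq_star_mul_self.mp hA.nonneg
  have h2 : Matrix.trace (A * B) = Matrix.trace (Sᴴᴴ * B * Sᴴ) := by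
    rw [hS, star_eq_conjTranspose, conjTranspose_conjTranspose, Matrix.mul_assoc,
      Matrix.trace_mul_comm, Matrix.mul_assoc]
  rw [h2]
  exact trace_re_nonneg' (hB.conjTranspose_mul_mul_same _)

/-- If `Ω` is Hermitian with `0 ≤ Ω ≤ I` and `Ω|ψ⟩ = |ψ⟩` for a unit
vector `ψ`, and `l = λ₂(Ω)` is the largest value of `⟨v|Ω|v⟩` over unit vectors
`v` orthogonal to `ψ` (the largest eigenvalue of `(I-|ψ⟩⟨ψ|)Ω(I-|ψ⟩⟨ψ|)` on the
orthogonal complement of `ψ`), then every density operator `σ` with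
`⟨ψ|σ|ψ⟩ ≤ 1-ε` satisfies `tr[Ωσ] ≤ 1 - (1 - λ₂(Ω))ε`, and the bound is attained. -/
theorem single_copy_passing_prob_bound {m : ℕ}
    (ψ : Fin m → ℂ) (hψ : star ψ ⬝ᵥ ψ = 1)
    (Ω : Matrix (Fin m) (Fin m) ℂ)
    (hherm : Ω.IsHermitian) (hpos : Ω.PosSemidef) (hle : (1 - Ω).PosSemidef)
    (hfix : Ω *ᵥ ψ = ψ)
    (l : ℝ)
    (hl : IsGreatest {x : ℝ | ∃ v : Fin m → ℂ, star v ⬝ᵥ v = 1 ∧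
        star ψ ⬝ᵥ v = 0 ∧ x = (star v ⬝ᵥ Ω *ᵥ v).re} l)
    (ε : ℝ) (hε0 : 0 ≤ ε) (hε1 : ε ≤ 1) :
    (∀ σ : Matrix (Fin m) (Fin m) ℂ, σ.PosSemidef → σ.trace = 1 →
        (star ψ ⬝ᵥ σ *ᵥ ψ).re ≤ 1 - ε → (Matrix.trace (Ω * σ)).re ≤ 1 - (1 - l) * ε) ∧
    (∃ σ : Matrix (Fin m) (Fin m) ℂ, σ.PosSemidef ∧ σ.trace = 1 ∧
        (star ψ ⬝ᵥ σ *ᵥ ψ).re ≤ 1 - ε ∧ (Matrix.trace (Ω * σ)).re = 1 - (1 - l) * ε) := by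
  obtain ⟨v, hv1, hv2, hv3⟩ := hl.1
  -- l ≤ 1
  have hl1 : l ≤ 1 := by
    have h := hle.re_dotProduct_nonneg v
    have hcalc : star v ⬝ᵥ (1 - Ω) *ᵥ v = star v ⬝ᵥ v - star v ⬝ᵥ Ω *ᵥ v := by
      rw [Matrix.sub_mulVec, dotProduct_sub, Matrix.one_mulVec]
    rw [hcalc, hv1] at h
    have : (1 : ℂ).re - (star v ⬝ᵥ Ω *ᵥ v).re ≥ 0 := by
      simpa [Complex.sub_re] using h
    simp only [Complex.one_re] at this
    linarith [hv3 ▸ this]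
  set P : Matrix (Fin m) (Fin m) ℂ := vecMulVec ψ (star ψ) with hPdef
  have hPH : Pᴴ = P := (outer_posSemidef ψ).isHermitian
  have hΩP : Ω * P = P := by
    ext i j
    simp only [hPdef, mul_apply, vecMulVec_apply, Pi.star_apply]
    calc ∑ k, Ω i k * (ψ k * star (ψ j)) = (∑ k, Ω i k * ψ k) * star (ψ j) := by
          rw [Finset.sum_mul]; exact Finset.sum_congr rfl fun k _ => by ring
      _ = ψ i * star (ψ j) := by
          have : (Ω *ᵥ ψ) i = ψ i := by rw [hfix]
          rw [← this]; rfl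
  have hPΩ : P * Ω = P := by
    have h := congrArg conjTranspose hΩP
    rwa [Matrix.conjTranspose_mul, hPH, hherm.eq] at h
  have hPP : P * P = P := by
    ext i j
    simp only [hPdef, mul_apply, vecMulVec_apply, Pi.star_apply]
    calc ∑ k, ψ i * star (ψ k) * (ψ k * star (ψ j))
        = (ψ i * star (ψ j)) * ∑ k, star (ψ k) * ψ k := by
          rw [Finset.mul_sum]; exact Finset.sum_congr rfl fun k _ => by ring
      _ = ψ i * star (ψ j) := by rw [show ∑ k, star (ψ k) * ψ k = 1 from hψ, mul_one]
  -- ψᴴ (1 - P) = 0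
  have hpsiQ : star ψ ᵥ* (1 - P) = 0 := by
    have hP : star ψ ᵥ* P = star ψ := by
      ext j
      show ∑ k, star (ψ k) * (ψ k * star (ψ j)) = star (ψ j)
      calc ∑ k, star (ψ k) * (ψ k * star (ψ j))
          = (∑ k, star (ψ k) * ψ k) * star (ψ j) := by
            rw [Finset.sum_mul]; exact Finset.sum_congr rfl fun k _ => by ring
        _ = star (ψ j) := by rw [show (∑ k, star (ψ k) * ψ k) = 1 from hψ, one_mul]
    rw [Matrix.vecMul_sub, Matrix.vecMul_one, hP, sub_self]
  -- key quadratic bound on the orthogonal complement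
  have hkey : ∀ y : Fin m → ℂ, star ψ ⬝ᵥ y = 0 →
      (star y ⬝ᵥ Ω *ᵥ y).re ≤ l * (star y ⬝ᵥ y).re := by
    intro y hy
    by_cases hy0 : y = 0
    · simp [hy0]
    · have hc : 0 < (star y ⬝ᵥ y).re := by
        have := (Matrix.dotProduct_star_self_pos_iff (v := y)).mpr hy0
        exact (Complex.lt_def.mp this).1
      set c : ℝ := (star y ⬝ᵥ y).re with hcdef
      have him : (star y ⬝ᵥ y).im = 0 := by
        have h := dotProduct_star_self_nonneg y (R := ℂ)
        exact ((Complex.le_def.mp h).2).symm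
      have hyc : star y ⬝ᵥ y = (c : ℂ) := by
        apply Complex.ext <;> simp [hcdef, him]
      set a : ℝ := (Real.sqrt c)⁻¹ with hadef
      have ha2 : a ^ 2 = c⁻¹ := by
        rw [hadef, ← Real.sqrt_inv]
        exact Real.sq_sqrt (by positivity)
      set u : Fin m → ℂ := (a : ℂ) • y with hudef
      have hsu : star u = (a : ℂ) • star y := by
        rw [hudef]; ext i; simp [Complex.conj_ofReal]
      have hu1 : star u ⬝ᵥ u = 1 := by
        rw [hudef, hsu, smul_dotProduct, dotProduct_smul, hyc, smul_eq_mul, smul_eq_mul]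
        rw [← Complex.ofReal_mul, ← Complex.ofReal_mul]
        norm_cast
        rw [show a * (a * c) = a ^ 2 * c by ring, ha2]
        field_simp
      have hu2 : star ψ ⬝ᵥ u = 0 := by
        rw [hudef, dotProduct_smul, hy, smul_zero]
      have hub := hl.2 ⟨u, hu1, hu2, rfl⟩
      have huΩ : star u ⬝ᵥ Ω *ᵥ u = ((a : ℂ) * a) * (star y ⬝ᵥ Ω *ᵥ y) := by
        rw [hudef, hsu, Matrix.mulVec_smul, smul_dotProduct, dotProduct_smul]
        simp [smul_eq_mul]; ring
      rw [huΩ] at hub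
      have hre : (((a : ℂ) * a) * (star y ⬝ᵥ Ω *ᵥ y)).re = a ^ 2 * (star y ⬝ᵥ Ω *ᵥ y).re := by
        rw [show ((a : ℂ) * a) = ((a ^ 2 : ℝ) : ℂ) by push_cast; ring, Complex.re_ofReal_mul]
      rw [hre, ha2] at hub
      calc (star y ⬝ᵥ Ω *ᵥ y).re = c * (c⁻¹ * (star y ⬝ᵥ Ω *ᵥ y).re) := by
            field_simp
        _ ≤ c * l := by exact mul_le_mul_of_nonneg_left hub (le_of_lt hc)
        _ = l * c := mul_comm _ _
  -- the matrix  l•(1-P) - (Ω - P)  is PSD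
  have hMeq : (1 - P) * ((l : ℂ) • 1 - Ω) * (1 - P)
      = (l : ℂ) • (1 - P) - (Ω - P) := by
    simp only [Matrix.sub_mul, Matrix.mul_sub, Matrix.smul_mul, Matrix.mul_smul,
      Matrix.one_mul, Matrix.mul_one, hPP, hΩP, hPΩ, smul_sub]
    abel
  have hMpsd : ((l : ℂ) • (1 - P) - (Ω - P)).PosSemidef := by
    rw [← hMeq]
    refine Matrix.PosSemidef.of_dotProduct_mulVec_nonneg ?_ ?_
    · have hQH : (1 - P)ᴴ = 1 - P := by
        rw [Matrix.conjTranspose_sub, Matrix.conjTranspose_one, hPH]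
      have hAH : ((l : ℂ) • 1 - Ω)ᴴ = (l : ℂ) • 1 - Ω := by
        rw [Matrix.conjTranspose_sub, Matrix.conjTranspose_smul, Matrix.conjTranspose_one,
          hherm.eq, Complex.star_def, Complex.conj_ofReal]
      show _ = _
      rw [Matrix.conjTranspose_mul, Matrix.conjTranspose_mul, hQH, hAH, Matrix.mul_assoc]
    · intro x
      have hQH : (1 - P)ᴴ = 1 - P := by
        rw [Matrix.conjTranspose_sub, Matrix.conjTranspose_one, hPH]
      have hrw : star x ⬝ᵥ ((1 - P) * ((l : ℂ) • 1 - Ω) * (1 - P)) *ᵥ x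
          = star ((1 - P) *ᵥ x) ⬝ᵥ ((l : ℂ) • 1 - Ω) *ᵥ ((1 - P) *ᵥ x) := by
        simp only [star_mulVec, Matrix.dotProduct_mulVec, Matrix.vecMul_vecMul, hQH,
          Matrix.mul_assoc]
      rw [hrw]
      set y := (1 - P) *ᵥ x with hydef
      have hyorth : star ψ ⬝ᵥ y = 0 := by
        rw [hydef, Matrix.dotProduct_mulVec, hpsiQ, zero_dotProduct]
      have hval : star y ⬝ᵥ ((l : ℂ) • 1 - Ω) *ᵥ y
          = (l : ℂ) * (star y ⬝ᵥ y) - star y ⬝ᵥ Ω *ᵥ y := by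
        rw [Matrix.sub_mulVec, dotProduct_sub, Matrix.smul_mulVec, Matrix.one_mulVec,
          dotProduct_smul, smul_eq_mul]
      rw [hval]
      have him1 : (star y ⬝ᵥ y).im = 0 :=
        ((Complex.le_def.mp (dotProduct_star_self_nonneg y (R := ℂ))).2).symm
      have him2 : (star y ⬝ᵥ Ω *ᵥ y).im = 0 :=
        ((Complex.le_def.mp (hpos.dotProduct_mulVec_nonneg y)).2).symm
      rw [Complex.le_def]
      constructor
      · simp only [Complex.sub_re, Complex.mul_re, Complex.ofReal_re, Complex.ofReal_im,
          him1, Complex.zero_re, mul_zero, zero_mul, sub_zero]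
        have := hkey y hyorth
        linarith
      · simp [Complex.sub_im, Complex.mul_im, him1, him2]
  refine ⟨?_, ?_⟩
  · -- upper bound
    intro σ hσpsd hσtr hσψ
    have h0 := trace_mul_re_nonneg' hMpsd hσpsd
    have hPσ : Matrix.trace (P * σ) = star ψ ⬝ᵥ σ *ᵥ ψ := trace_outer_mul ψ σ
    have hexp : ((l : ℂ) • (1 - P) - (Ω - P)) * σ
        = (l : ℂ) • (σ - P * σ) - (Ω * σ - P * σ) := by
      rw [Matrix.sub_mul, Matrix.smul_mul, Matrix.sub_mul, Matrix.one_mul, Matrix.sub_mul]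
    rw [hexp] at h0
    have htr : Matrix.trace ((l : ℂ) • (σ - P * σ) - (Ω * σ - P * σ))
        = (l : ℂ) * (1 - star ψ ⬝ᵥ σ *ᵥ ψ) - (Matrix.trace (Ω * σ) - star ψ ⬝ᵥ σ *ᵥ ψ) := by
      rw [Matrix.trace_sub, Matrix.trace_smul, Matrix.trace_sub, Matrix.trace_sub, hPσ, hσtr,
        smul_eq_mul]
    rw [htr] at h0
    set t := star ψ ⬝ᵥ σ *ᵥ ψ with htdef
    have htim : t.im = 0 := ((Complex.le_def.mp (hσpsd.dotProduct_mulVec_nonneg ψ)).2).symm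
    have h0' : 0 ≤ l * (1 - t.re) - ((Matrix.trace (Ω * σ)).re - t.re) := by
      have := h0
      simp only [Complex.sub_re, Complex.mul_re, Complex.ofReal_re, Complex.ofReal_im,
        Complex.one_re, Complex.one_im, htim, zero_mul, mul_zero, sub_zero, zero_sub,
        neg_zero] at this
      linarith [this]
    have h2 : (1 : ℝ) - l ≥ 0 := by linarith
    nlinarith [mul_nonneg h2 (by linarith [hσψ] : (0:ℝ) ≤ 1 - ε - t.re)]
  · -- attainment
    refine ⟨((1 - ε : ℝ) : ℂ) • P + ((ε : ℝ) : ℂ) • vecMulVec v (star v), ?_, ?_, ?_, ?_⟩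
    · apply Matrix.PosSemidef.add
      · refine Matrix.PosSemidef.of_dotProduct_mulVec_nonneg (smul_outer_herm (1 - ε) ψ) ?_
        intro x
        rw [Matrix.smul_mulVec, dotProduct_smul]
        exact smul_nonneg (by rw [Complex.le_def]; constructor <;> simp <;> linarith)
          ((outer_posSemidef ψ).dotProduct_mulVec_nonneg x)
      · refine Matrix.PosSemidef.of_dotProduct_mulVec_nonneg (smul_outer_herm ε v) ?_
        intro x
        rw [Matrix.smul_mulVec, dotProduct_smul]
        exact smul_nonneg (by rw [Complex.le_def]; constructor <;> simp <;> linarith)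
          ((outer_posSemidef v).dotProduct_mulVec_nonneg x)
    · rw [Matrix.trace_add, Matrix.trace_smul, Matrix.trace_smul, trace_outer, trace_outer,
        hψ, hv1]
      simp only [smul_eq_mul, mul_one]
      push_cast
      ring
    · rw [Matrix.add_mulVec, dotProduct_add, Matrix.smul_mulVec,
        Matrix.smul_mulVec, dotProduct_smul, dotProduct_smul, dot_outer, dot_outer,
        hψ, hv2]
      simp [Complex.ofReal_re]
    · rw [Matrix.mul_add, Matrix.mul_smul, Matrix.mul_smul, Matrix.trace_add,
        Matrix.trace_smul, Matrix.trace_smul, hΩP, trace_outer, trace_mul_outer, hψ]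
      rw [smul_eq_mul, smul_eq_mul, mul_one]
      rw [Complex.add_re, Complex.re_ofReal_mul, Complex.ofReal_re, ← hv3]
      ring
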